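/- Let V be a nonempty vertical path with u North steps and d South steps whose final step is S, and let H be a horizontal path with r East steps and l West steps. For every natural number k, the number of shuffles of V and H whose In-Vert equals k is C(r+u, u+d−k) · C(l+d, k), where C(a,b) denotes the binomial coefficient, taken to be 0 unless 0 ≤ b ≤ a. -/

import Mathlib

inductive Step : Type
  | E | W | N | S
deriving DecidableEq, Repr

open Step

/-- A step is vertical (North or South). -/
def isVert : Step → Bool
  | N => true
  | S => true
  | _ => false

/-- A step is horizontal (East or West). -/
def isHoriz : Step → Bool
  | E => true
  | W => true
  | _ => false

/-- `σ` is a shuffle (interleaving) of the vertical path `V` and horizontal path `H`: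
its subsequence of vertical steps is `V` and its subsequence of horizontal steps is `H`. -/
def IsShuffle (V H σ : List Step) : Prop :=
  σ.filter isVert = V ∧ σ.filter isHoriz = H

/-- The list of adjacent pairs `(σ_i, σ_{i+1})` of a list. -/
def pairs (σ : List Step) : List (Step × Step) := σ.zip σ.tail

/-- Signed peak-count: (# of (N,W) adjacent pairs) − (# of (E,S) adjacent pairs). -/
def signedPeak (σ : List Step) : ℤ :=
  (((pairs σ).filter (fun p => decide (p.1 = N ∧ p.2 = W))).length : ℤ)
  - (((pairs σ).filter (fun p => decide (p.1 = E ∧ p.2 = S))).length : ℤ)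

/-- Peak-count: (# of (N,W) adjacent pairs) + (# of (E,S) adjacent pairs). -/
def peakCount (σ : List Step) : ℕ :=
  ((pairs σ).filter (fun p => decide (p.1 = N ∧ p.2 = W))).length
  + ((pairs σ).filter (fun p => decide (p.1 = E ∧ p.2 = S))).length

/-- Binomial coefficient with integer arguments, equal to 0 unless `0 ≤ b ≤ a`. -/
def zch (a b : ℤ) : ℕ := if 0 ≤ b ∧ b ≤ a then a.toNat.choose b.toNat else 0

/-- In-Vert of `σ`: the number of indices `j ≥ 1` such that `σ_j` is vertical and either
`j = 1` or `σ_{j−1}` is an inward step (inward steps are `{W, S}`).  This corresponds to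
viewing `σ` as preceded by a virtual zeroth inward step and counting occurrences of an
inward step immediately followed by a vertical step. -/
def invert (σ : List Step) : ℕ :=
  (if σ.head? = some Step.N ∨ σ.head? = some Step.S then 1 else 0)
  + ((pairs σ).filter (fun p => decide ((p.1 = Step.W ∨ p.1 = Step.S) ∧ (p.2 = Step.N ∨ p.2 = Step.S)))).length



lemma zch_of_not (a b : ℤ) (h : ¬ (0 ≤ b ∧ b ≤ a)) : zch a b = 0 := if_neg h

lemma zch_diag (a : ℤ) (ha : 0 ≤ a) : zch a a = 1 := by
  unfold zch; rw [if_pos ⟨ha, le_rfl⟩]; exact Nat.choose_self _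

lemma zch_zero (a : ℤ) (ha : 0 ≤ a) : zch a 0 = 1 := by
  unfold zch; rw [if_pos ⟨le_rfl, ha⟩]; simp

lemma zch_pascal (a : ℤ) (ha : 0 ≤ a) (b : ℤ) :
    zch (a + 1) b = zch a (b - 1) + zch a b := by
  rcases lt_or_ge b 0 with hb | hb
  · rw [zch_of_not _ _ (by omega), zch_of_not _ _ (by omega), zch_of_not _ _ (by omega)]
  rcases eq_or_lt_of_le hb with hb0 | hb1
  · rw [← hb0]
    rw [zch_zero _ (by omega), zch_of_not _ _ (by omega), zch_zero _ ha]
  · rcases lt_trichotomy b (a+1) with h | h | h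
    · unfold zch
      rw [if_pos (by omega), if_pos (by omega), if_pos (by omega)]
      have h1 : (a+1).toNat = a.toNat + 1 := by omega
      have h2 : b.toNat = (b-1).toNat + 1 := by omega
      rw [h1, h2, Nat.choose_succ_succ]
    · unfold zch
      rw [if_pos (by omega), if_pos (by omega), if_neg (by omega)]
      have h1 : (a+1).toNat = b.toNat := by omega
      have h2 : (b-1).toNat = a.toNat := by omega
      rw [h1, h2, Nat.choose_self, Nat.choose_self]
    · rw [zch_of_not _ _ (by omega), zch_of_not _ _ (by omega), zch_of_not _ _ (by omega)]

def Fz (u d r l k : ℕ) : ℕ := zch ((r:ℤ)+u) ((u:ℤ)+d-k) * zch ((l:ℤ)+d) (k:ℤ)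
def Gz (u d r l k : ℕ) : ℕ := zch ((r:ℤ)+u+1) ((u:ℤ)+d-k) * zch ((l:ℤ)+d-1) (k:ℤ)

lemma key0 (A B m : ℤ) (hB : 0 ≤ B) : zch A m * zch (B+1) 0 = 0 + zch A m * zch B 0 := by
  rw [zch_zero _ (by omega), zch_zero _ hB, zero_add]

lemma key1 (A B m : ℤ) (hB : 0 ≤ B) (k' : ℕ) :
    zch A m * zch (B+1) ((k':ℤ)+1) = zch A m * zch B (k':ℤ) + zch A m * zch B ((k':ℤ)+1) := by
  rw [zch_pascal B hB, mul_add, show ((k':ℤ)+1-1) = (k':ℤ) by ring]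

lemma key2 (A B m k : ℤ) (hA : 0 ≤ A) :
    zch (A+1) m * zch B k = zch A (m-1) * zch B k + zch A m * zch B k := by
  rw [zch_pascal A hA, add_mul]

lemma idA1 (U D R L k : ℕ) (hD : 1 ≤ D) :
    Fz (U+1) D (R+1) L k
      = (match k with | 0 => 0 | (k'+1) => Gz U D (R+1) L k') + Gz (U+1) D R L k := by
  unfold Fz Gz
  cases k with
  | zero =>
      convert key0 ((R:ℤ)+U+2) ((L:ℤ)+D-1) ((U:ℤ)+1+D) (by omega) using 3 <;> push_cast <;> ring
  | succ k' =>
      convert key1 ((R:ℤ)+U+2) ((L:ℤ)+D-1) ((U:ℤ)+D-k') (by omega) k' using 3 <;> push_cast <;> ring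

lemma idA2 (U D R L k : ℕ) :
    Fz (U+1) D R (L+1) k
      = (match k with | 0 => 0 | (k'+1) => Gz U D R (L+1) k') + Fz (U+1) D R L k := by
  unfold Fz Gz
  cases k with
  | zero =>
      convert key0 ((R:ℤ)+U+1) ((L:ℤ)+D) ((U:ℤ)+1+D) (by omega) using 3 <;> push_cast <;> ring
  | succ k' =>
      convert key1 ((R:ℤ)+U+1) ((L:ℤ)+D) ((U:ℤ)+D-k') (by omega) k' using 3 <;> push_cast <;> ring

lemma idB1 (U D R L k : ℕ) :
    Fz U (D+1) (R+1) L k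
      = (match k with | 0 => 0 | (k'+1) => Fz U D (R+1) L k') + Gz U (D+1) R L k := by
  unfold Fz Gz
  cases k with
  | zero =>
      convert key0 ((R:ℤ)+U+1) ((L:ℤ)+D) ((U:ℤ)+D+1) (by omega) using 3 <;> push_cast <;> ring
  | succ k' =>
      convert key1 ((R:ℤ)+U+1) ((L:ℤ)+D) ((U:ℤ)+D-k') (by omega) k' using 3 <;> push_cast <;> ring

lemma idB2 (U D R L k : ℕ) :
    Fz U (D+1) R (L+1) k
      = (match k with | 0 => 0 | (k'+1) => Fz U D R (L+1) k') + Fz U (D+1) R L k := by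
  unfold Fz
  cases k with
  | zero =>
      convert key0 ((R:ℤ)+U) ((L:ℤ)+D+1) ((U:ℤ)+D+1) (by omega) using 3 <;> push_cast <;> ring
  | succ k' =>
      convert key1 ((R:ℤ)+U) ((L:ℤ)+D+1) ((U:ℤ)+D-k') (by omega) k' using 3 <;> push_cast <;> ring

lemma idC1 (U D R L k : ℕ) :
    Gz (U+1) D (R+1) L k = Gz U D (R+1) L k + Gz (U+1) D R L k := by
  unfold Gz
  convert key2 ((R:ℤ)+U+2) ((L:ℤ)+D-1) ((U:ℤ)+1+D-k) (k:ℤ) (by omega) using 3 <;>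
    push_cast <;> ring

lemma idC2 (U D R L k : ℕ) :
    Gz (U+1) D R (L+1) k = Gz U D R (L+1) k + Fz (U+1) D R L k := by
  unfold Fz Gz
  convert key2 ((R:ℤ)+U+1) ((L:ℤ)+D) ((U:ℤ)+1+D-k) (k:ℤ) (by omega) using 3 <;>
    push_cast <;> ring

lemma idD1 (U D R L k : ℕ) :
    Gz U (D+1) (R+1) L k = Fz U D (R+1) L k + Gz U (D+1) R L k := by
  unfold Fz Gz
  convert key2 ((R:ℤ)+U+1) ((L:ℤ)+D) ((U:ℤ)+D+1-k) (k:ℤ) (by omega) using 3 <;>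
    push_cast <;> ring

lemma idD2 (U D R L k : ℕ) :
    Gz U (D+1) R (L+1) k = Fz U D R (L+1) k + Fz U (D+1) R L k := by
  unfold Fz Gz
  convert key2 ((R:ℤ)+U) ((L:ℤ)+D+1) ((U:ℤ)+D+1-k) (k:ℤ) (by omega) using 3 <;>
    push_cast <;> ring

lemma Fz_base (u d k : ℕ) : Fz u d 0 0 k = if d = k then 1 else 0 := by
  unfold Fz
  simp only [Nat.cast_zero, zero_add]
  rcases lt_trichotomy d k with h | h | h
  · rw [if_neg (by omega), zch_of_not _ (k:ℤ) (by omega), mul_zero]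
  · subst h
    rw [if_pos rfl, show ((u:ℤ)+d-d) = (u:ℤ) by ring, zch_diag _ (by omega),
      zch_diag _ (by omega)]
  · rw [if_neg (by omega), zch_of_not _ _ (by omega), zero_mul]

lemma Gz_base (u d k : ℕ) (hd : 1 ≤ d) : Gz u d 0 0 k = if d = k + 1 then 1 else 0 := by
  unfold Gz
  simp only [Nat.cast_zero, zero_add]
  rcases lt_trichotomy d (k+1) with h | h | h
  · rw [if_neg (by omega), zch_of_not _ (k:ℤ) (by omega), mul_zero]
  · rw [if_pos h, show ((u:ℤ)+d-k) = (u:ℤ)+1 by omega, show ((d:ℤ)-1) = (k:ℤ) by omega,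
      zch_diag _ (by omega), zch_diag _ (by omega)]
  · rw [if_neg (by omega), zch_of_not _ _ (by omega), zero_mul]

/-- is the step an "inward" step (W or S)? -/
def inward : Step → Bool
  | W => true
  | S => true
  | _ => false

def invertAux : Bool → List Step → ℕ
  | _, [] => 0
  | prev, x :: t => (if prev && isVert x then 1 else 0) + invertAux (inward x) t

lemma invertAux_aux (σ : List Step) : ∀ x : Step,
    invertAux (inward x) σ
      = ((pairs (x :: σ)).filter
          (fun p => decide ((p.1 = Step.W ∨ p.1 = Step.S) ∧ (p.2 = Step.N ∨ p.2 = Step.S)))).length := by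
  induction σ with
  | nil => intro x; simp [invertAux, pairs]
  | cons y t ih =>
      intro x
      have h1 : pairs (x :: y :: t) = (x, y) :: pairs (y :: t) := rfl
      rw [h1, List.filter_cons]
      have h2 : invertAux (inward x) (y :: t)
          = (if inward x && isVert y then 1 else 0) + invertAux (inward y) t := rfl
      rw [h2, ih y]
      cases x <;> cases y <;> simp [inward, isVert] <;> omega

lemma invert_eq (σ : List Step) : invert σ = invertAux true σ := by
  cases σ with
  | nil => rfl
  | cons x t =>
      unfold invert
      rw [← invertAux_aux t x]
      have h2 : invertAux true (x :: t)
          = (if isVert x then 1 else 0) + invertAux (inward x) t := by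
        simp [invertAux]
      rw [h2]
      cases x <;> simp [isVert]

def shuffles : List Step → List Step → List (List Step)
  | [], H => [H]
  | v :: V, [] => [v :: V]
  | v :: V, h :: H =>
      (shuffles V (h :: H)).map (v :: ·) ++ (shuffles (v :: V) H).map (h :: ·)
  termination_by V H => V.length + H.length

lemma shuffles_nil_left (H : List Step) : shuffles [] H = [H] := by rw [shuffles]
lemma shuffles_cons_nil (v : Step) (V : List Step) : shuffles (v :: V) [] = [v :: V] := by
  rw [shuffles]
lemma shuffles_cons_cons (v h : Step) (V H : List Step) :
    shuffles (v :: V) (h :: H)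
      = (shuffles V (h :: H)).map (v :: ·) ++ (shuffles (v :: V) H).map (h :: ·) := by
  rw [shuffles]

lemma vert_not_horiz {s : Step} (h : isVert s = true) : isHoriz s = false := by
  cases s <;> simp_all [isVert, isHoriz]
lemma horiz_not_vert {s : Step} (h : isHoriz s = true) : isVert s = false := by
  cases s <;> simp_all [isVert, isHoriz]
lemma vert_or_horiz (s : Step) : isVert s = true ∨ isHoriz s = true := by
  cases s <;> simp [isVert, isHoriz]

lemma mem_shuffles : ∀ (V H : List Step), (∀ s ∈ V, isVert s = true) →
    (∀ s ∈ H, isHoriz s = true) → ∀ (σ : List Step),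
    (σ ∈ shuffles V H ↔ IsShuffle V H σ) := by
  intro V H
  induction V, H using shuffles.induct with
  | case1 H =>
      intro hV hH σ
      rw [shuffles_nil_left]
      simp only [List.mem_singleton]
      constructor
      · rintro rfl
        refine ⟨List.filter_eq_nil_iff.2 ?_, List.filter_eq_self.2 hH⟩
        intro a ha; simp [horiz_not_vert (hH a ha)]
      · rintro ⟨h1, h2⟩
        rw [← h2]
        symm
        apply List.filter_eq_self.2
        intro a ha
        rcases vert_or_horiz a with h | h
        · exfalso
          have : a ∈ σ.filter isVert := List.mem_filter.2 ⟨ha, h⟩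
          rw [h1] at this; simp at this
        · exact h
  | case2 v V =>
      intro hV hH σ
      rw [shuffles_cons_nil]
      simp only [List.mem_singleton]
      constructor
      · rintro rfl
        refine ⟨List.filter_eq_self.2 hV, List.filter_eq_nil_iff.2 ?_⟩
        intro a ha; simp [vert_not_horiz (hV a ha)]
      · rintro ⟨h1, h2⟩
        rw [← h1]
        symm
        apply List.filter_eq_self.2
        intro a ha
        rcases vert_or_horiz a with h | h
        · exact h
        · exfalso
          have : a ∈ σ.filter isHoriz := List.mem_filter.2 ⟨ha, h⟩
          rw [h2] at this; simp at this
  | case3 v V h H ih1 ih2 =>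
      intro hV hH σ
      have hv : isVert v = true := hV v (by simp)
      have hh : isHoriz h = true := hH h (by simp)
      have hV' : ∀ s ∈ V, isVert s = true := fun s hs => hV s (by simp [hs])
      have hH' : ∀ s ∈ H, isHoriz s = true := fun s hs => hH s (by simp [hs])
      rw [shuffles_cons_cons]
      simp only [List.mem_append, List.mem_map]
      constructor
      · rintro (⟨σ', hσ', rfl⟩ | ⟨σ', hσ', rfl⟩)
        · obtain ⟨e1, e2⟩ := (ih1 hV' hH σ').1 hσ'
          exact ⟨by rw [List.filter_cons, if_pos (by simp [hv]), e1],
                 by rw [List.filter_cons, if_neg (by simp [vert_not_horiz hv]), e2]⟩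
        · obtain ⟨e1, e2⟩ := (ih2 hV hH' σ').1 hσ'
          exact ⟨by rw [List.filter_cons, if_neg (by simp [horiz_not_vert hh]), e1],
                 by rw [List.filter_cons, if_pos (by simp [hh]), e2]⟩
      · rintro ⟨h1, h2⟩
        cases σ with
        | nil => simp at h1
        | cons x t =>
            rcases vert_or_horiz x with hx | hx
            · left
              have : x = v ∧ t.filter isVert = V := by
                rw [List.filter_cons, if_pos (by simp [hx])] at h1
                exact ⟨List.head_eq_of_cons_eq h1, List.tail_eq_of_cons_eq h1⟩
              obtain ⟨rfl, e1⟩ := this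
              have e2 : t.filter isHoriz = h :: H := by
                rw [List.filter_cons, if_neg (by simp [vert_not_horiz hx])] at h2
                exact h2
              exact ⟨t, (ih1 hV' hH t).2 ⟨e1, e2⟩, rfl⟩
            · right
              have : x = h ∧ t.filter isHoriz = H := by
                rw [List.filter_cons, if_pos (by simp [hx])] at h2
                exact ⟨List.head_eq_of_cons_eq h2, List.tail_eq_of_cons_eq h2⟩
              obtain ⟨rfl, e2⟩ := this
              have e1 : t.filter isVert = v :: V := by
                rw [List.filter_cons, if_neg (by simp [horiz_not_vert hx])] at h1
                exact h1
              exact ⟨t, (ih2 hV hH' t).2 ⟨e1, e2⟩, rfl⟩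

lemma nodup_shuffles : ∀ (V H : List Step), (∀ s ∈ V, isVert s = true) →
    (∀ s ∈ H, isHoriz s = true) → (shuffles V H).Nodup := by
  intro V H
  induction V, H using shuffles.induct with
  | case1 H => intro _ _; rw [shuffles_nil_left]; exact List.nodup_singleton _
  | case2 v V => intro _ _; rw [shuffles_cons_nil]; exact List.nodup_singleton _
  | case3 v V h H ih1 ih2 =>
      intro hV hH
      have hv : isVert v = true := hV v (by simp)
      have hh : isHoriz h = true := hH h (by simp)
      have hvh : v ≠ h := by
        intro e; rw [e] at hv; rw [vert_not_horiz hv] at hh; simp at hh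
      have hV' : ∀ s ∈ V, isVert s = true := fun s hs => hV s (by simp [hs])
      have hH' : ∀ s ∈ H, isHoriz s = true := fun s hs => hH s (by simp [hs])
      rw [shuffles_cons_cons]
      refine List.Nodup.append ?_ ?_ ?_
      · exact (ih1 hV' hH).map (fun a b e => List.tail_eq_of_cons_eq e)
      · exact (ih2 hV hH').map (fun a b e => List.tail_eq_of_cons_eq e)
      · intro a ha hb
        obtain ⟨σ1, _, rfl⟩ := List.mem_map.1 ha
        obtain ⟨σ2, _, e⟩ := List.mem_map.1 hb
        exact hvh (List.head_eq_of_cons_eq e.symm)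

lemma invertAux_horiz (H : List Step) (hH : ∀ s ∈ H, isHoriz s = true) :
    ∀ b, invertAux b H = 0 := by
  induction H with
  | nil => intro b; rfl
  | cons h t ih =>
      intro b
      have hh := hH h (by simp)
      have : invertAux b (h :: t) = (if b && isVert h then 1 else 0) + invertAux (inward h) t := rfl
      rw [this, horiz_not_vert hh, ih (fun s hs => hH s (by simp [hs]))]
      simp

lemma ia_N (b : Bool) (σ : List Step) :
    invertAux b (N :: σ) = (if b then 1 else 0) + invertAux false σ := by
  cases b <;> simp [invertAux, inward, isVert]
lemma ia_S (b : Bool) (σ : List Step) :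
    invertAux b (S :: σ) = (if b then 1 else 0) + invertAux true σ := by
  cases b <;> simp [invertAux, inward, isVert]
lemma ia_E (b : Bool) (σ : List Step) : invertAux b (E :: σ) = invertAux false σ := by
  cases b <;> simp [invertAux, inward, isVert]
lemma ia_W (b : Bool) (σ : List Step) : invertAux b (W :: σ) = invertAux true σ := by
  cases b <;> simp [invertAux, inward, isVert]

lemma step_vert_cases {s : Step} (h : isVert s = true) : s = N ∨ s = S := by
  cases s <;> simp_all [isVert]
lemma step_horiz_cases {s : Step} (h : isHoriz s = true) : s = E ∨ s = W := by
  cases s <;> simp_all [isHoriz]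

lemma invertAux_vert : ∀ (V : List Step), (∀ s ∈ V, isVert s = true) →
    V.getLast? = some Step.S →
    invertAux true V = V.count S ∧ invertAux false V + 1 = V.count S := by
  intro V
  induction V with
  | nil => intro _ h; simp at h
  | cons x t ih =>
      intro hV hlast
      have hx := hV x (by simp)
      rcases t with _ | ⟨y, t'⟩
      · have : x = S := by simpa using hlast
        subst this
        constructor <;> simp [invertAux, inward, isVert, List.count_cons]
      · rw [List.getLast?_cons_cons] at hlast
        obtain ⟨e1, e2⟩ := ih (fun s hs => hV s (by simp [hs])) hlast
        rcases step_vert_cases hx with rfl | rfl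
        · rw [ia_N, ia_N]
          simp [List.count_cons] at e1 e2 ⊢
          omega
        · rw [ia_S, ia_S]
          simp [List.count_cons] at e1 e2 ⊢
          omega

lemma countP_vt0 (L : List (List Step)) (g : List Step → ℕ) (f : List Step → ℕ)
    (hfg : ∀ σ, f σ = 1 + g σ) :
    L.countP (fun σ => decide (f σ = 0)) = 0 := by
  rw [List.countP_eq_zero]
  intro σ _
  simp [hfg]

lemma countP_vtS (L : List (List Step)) (g : List Step → ℕ) (f : List Step → ℕ)
    (hfg : ∀ σ, f σ = 1 + g σ) (k' : ℕ) :
    L.countP (fun σ => decide (f σ = k' + 1)) = L.countP (fun σ => decide (g σ = k')) := by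
  apply List.countP_congr
  intro σ _
  simp only [decide_eq_true_eq, hfg]
  omega

lemma countP_eqf (L : List (List Step)) (f g : List Step → ℕ) (hfg : ∀ σ, f σ = g σ) (k : ℕ) :
    L.countP (fun σ => decide (f σ = k)) = L.countP (fun σ => decide (g σ = k)) := by
  apply List.countP_congr
  intro σ _
  simp only [decide_eq_true_eq, hfg]

lemma shuffles_countP_cons_cons (b : Bool) (v h : Step) (V H : List Step) (k : ℕ) :
    (shuffles (v :: V) (h :: H)).countP (fun σ => decide (invertAux b σ = k))
      = (shuffles V (h :: H)).countP (fun σ => decide (invertAux b (v :: σ) = k))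
        + (shuffles (v :: V) H).countP (fun σ => decide (invertAux b (h :: σ) = k)) := by
  rw [shuffles_cons_cons, List.countP_append, List.countP_map, List.countP_map]
  rfl

lemma Fz_nil (r l k : ℕ) : Fz 0 0 r l k = if 0 = k then 1 else 0 := by
  unfold Fz
  rcases Nat.eq_zero_or_pos k with rfl | hk
  · rw [if_pos rfl]
    simp only [Nat.cast_zero, add_zero, sub_zero, zero_add]
    rw [zch_zero _ (by omega), zch_zero _ (by omega)]
  · rw [if_neg (by omega), zch_of_not _ _ (by omega), zero_mul]

lemma main : ∀ (n : ℕ) (V H : List Step), V.length + H.length ≤ n →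
    (∀ s ∈ V, isVert s = true) → (∀ s ∈ H, isHoriz s = true) →
    (V = [] ∨ V.getLast? = some Step.S) →
    (∀ k, (shuffles V H).countP (fun σ => decide (invertAux true σ = k))
        = Fz (V.count N) (V.count S) (H.count E) (H.count W) k)
    ∧ (V ≠ [] → ∀ k, (shuffles V H).countP (fun σ => decide (invertAux false σ = k))
        = Gz (V.count N) (V.count S) (H.count E) (H.count W) k) := by
  intro n
  induction n using Nat.strong_induction_on with
  | _ n ih =>
  intro V H hlen hV hH hlast
  rcases V with _ | ⟨v, V'⟩
  · constructor
    · intro k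
      rw [shuffles_nil_left]
      simp only [List.countP_cons, List.countP_nil, invertAux_horiz H hH true,
        List.count_nil, zero_add, decide_eq_true_eq]
      rw [Fz_nil]
    · intro hne; exact absurd rfl hne
  · have hlastS : (v :: V').getLast? = some Step.S := hlast.resolve_left (by simp)
    rcases H with _ | ⟨h, H'⟩
    · obtain ⟨e1, e2⟩ := invertAux_vert (v :: V') hV hlastS
      constructor
      · intro k
        rw [shuffles_cons_nil]
        simp only [List.countP_cons, List.countP_nil, zero_add, decide_eq_true_eq, e1,
          List.count_nil]
        rw [Fz_base]
      · intro _ k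
        rw [shuffles_cons_nil]
        simp only [List.countP_cons, List.countP_nil, zero_add, decide_eq_true_eq,
          List.count_nil]
        rw [Gz_base _ _ _ (by omega)]
        have e3 : (invertAux false (v :: V') = k) ↔ ((v :: V').count S = k + 1) := by omega
        simp only [e3]
    · have hv := hV v (by simp)
      have hh := hH h (by simp)
      have hV' : ∀ s ∈ V', isVert s = true := fun s hs => hV s (by simp [hs])
      have hH' : ∀ s ∈ H', isHoriz s = true := fun s hs => hH s (by simp [hs])
      have hlast' : V' = [] ∨ V'.getLast? = some Step.S := by
        rcases V' with _ | ⟨a, t⟩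
        · exact Or.inl rfl
        · rw [List.getLast?_cons_cons] at hlastS
          exact Or.inr hlastS
      have hn2 : 2 ≤ n := by
        simp only [List.length_cons] at hlen; omega
      have ih1 := ih (n-1) (by omega) V' (h :: H')
        (by simp only [List.length_cons] at hlen ⊢; omega) hV' hH hlast'
      have ih2 := ih (n-1) (by omega) (v :: V') H'
        (by simp only [List.length_cons] at hlen ⊢; omega) hV hH' hlast
      rcases step_vert_cases hv with rfl | rfl
      · -- v = N
        have hne' : V' ≠ [] := by rintro rfl; simp at hlastS
        have hlastV' : V'.getLast? = some Step.S := hlast'.resolve_left hne'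
        have hD : 1 ≤ V'.count S :=
          List.count_pos_iff.2 (List.mem_of_getLast? hlastV')
        rcases step_horiz_cases hh with rfl | rfl
        · -- v = N, h = E
          constructor
          · intro k
            rw [shuffles_countP_cons_cons,
              countP_eqf (shuffles (N :: V') H') _ (fun σ => invertAux false σ) (fun σ => by simp [ia_E]) k,
              ih2.2 (by simp) k]
            cases k with
            | zero =>
                rw [countP_vt0 (shuffles V' (E :: H')) (fun σ => invertAux false σ) _ (fun σ => by simp [ia_N])]
                simp [List.count_cons]
                simpa using (idA1 _ _ _ _ 0 hD).symm
            | succ k' =>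
                rw [countP_vtS (shuffles V' (E :: H')) (fun σ => invertAux false σ) _ (fun σ => by simp [ia_N]) k',
                  ih1.2 hne' k']
                simp [List.count_cons]
                exact (idA1 _ _ _ _ (k'+1) hD).symm
          · intro _ k
            rw [shuffles_countP_cons_cons,
              countP_eqf (shuffles V' (E :: H')) _ (fun σ => invertAux false σ) (fun σ => by simp [ia_N]) k,
              countP_eqf (shuffles (N :: V') H') _ (fun σ => invertAux false σ) (fun σ => by simp [ia_E]) k,
              ih1.2 hne' k, ih2.2 (by simp) k]
            simp [List.count_cons]
            exact (idC1 _ _ _ _ k).symm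
        · -- v = N, h = W
          constructor
          · intro k
            rw [shuffles_countP_cons_cons,
              countP_eqf (shuffles (N :: V') H') _ (fun σ => invertAux true σ) (fun σ => by simp [ia_W]) k,
              ih2.1 k]
            cases k with
            | zero =>
                rw [countP_vt0 (shuffles V' (W :: H')) (fun σ => invertAux false σ) _ (fun σ => by simp [ia_N])]
                simp [List.count_cons]
                simpa using (idA2 _ _ _ _ 0).symm
            | succ k' =>
                rw [countP_vtS (shuffles V' (W :: H')) (fun σ => invertAux false σ) _ (fun σ => by simp [ia_N]) k',
                  ih1.2 hne' k']
                simp [List.count_cons]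
                exact (idA2 _ _ _ _ (k'+1)).symm
          · intro _ k
            rw [shuffles_countP_cons_cons,
              countP_eqf (shuffles V' (W :: H')) _ (fun σ => invertAux false σ) (fun σ => by simp [ia_N]) k,
              countP_eqf (shuffles (N :: V') H') _ (fun σ => invertAux true σ) (fun σ => by simp [ia_W]) k,
              ih1.2 hne' k, ih2.1 k]
            simp [List.count_cons]
            exact (idC2 _ _ _ _ k).symm
      · -- v = S
        rcases step_horiz_cases hh with rfl | rfl
        · -- v = S, h = E
          constructor
          · intro k
            rw [shuffles_countP_cons_cons,
              countP_eqf (shuffles (S :: V') H') _ (fun σ => invertAux false σ) (fun σ => by simp [ia_E]) k,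
              ih2.2 (by simp) k]
            cases k with
            | zero =>
                rw [countP_vt0 (shuffles V' (E :: H')) (fun σ => invertAux true σ) _ (fun σ => by simp [ia_S])]
                simp [List.count_cons]
                simpa using (idB1 _ _ _ _ 0).symm
            | succ k' =>
                rw [countP_vtS (shuffles V' (E :: H')) (fun σ => invertAux true σ) _ (fun σ => by simp [ia_S]) k',
                  ih1.1 k']
                simp [List.count_cons]
                exact (idB1 _ _ _ _ (k'+1)).symm
          · intro _ k
            rw [shuffles_countP_cons_cons,
              countP_eqf (shuffles V' (E :: H')) _ (fun σ => invertAux true σ) (fun σ => by simp [ia_S]) k,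
              countP_eqf (shuffles (S :: V') H') _ (fun σ => invertAux false σ) (fun σ => by simp [ia_E]) k,
              ih1.1 k, ih2.2 (by simp) k]
            simp [List.count_cons]
            exact (idD1 _ _ _ _ k).symm
        · -- v = S, h = W
          constructor
          · intro k
            rw [shuffles_countP_cons_cons,
              countP_eqf (shuffles (S :: V') H') _ (fun σ => invertAux true σ) (fun σ => by simp [ia_W]) k,
              ih2.1 k]
            cases k with
            | zero =>
                rw [countP_vt0 (shuffles V' (W :: H')) (fun σ => invertAux true σ) _ (fun σ => by simp [ia_S])]
                simp [List.count_cons]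
                simpa using (idB2 _ _ _ _ 0).symm
            | succ k' =>
                rw [countP_vtS (shuffles V' (W :: H')) (fun σ => invertAux true σ) _ (fun σ => by simp [ia_S]) k',
                  ih1.1 k']
                simp [List.count_cons]
                exact (idB2 _ _ _ _ (k'+1)).symm
          · intro _ k
            rw [shuffles_countP_cons_cons,
              countP_eqf (shuffles V' (W :: H')) _ (fun σ => invertAux true σ) (fun σ => by simp [ia_S]) k,
              countP_eqf (shuffles (S :: V') H') _ (fun σ => invertAux true σ) (fun σ => by simp [ia_W]) k,
              ih1.1 k, ih2.1 k]
            simp [List.count_cons]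
            exact (idD2 _ _ _ _ k).symm

/-- **Proposition (In-Vert enumeration).**
If `V` is a nonempty vertical path with `u` North and `d` South steps ending in `S`, and
`H` is a horizontal path with `r` East and `l` West steps, then for every natural number
`k` the number of shuffles of `V` and `H` with In-Vert `k` is `C(r+u, u+d−k) · C(l+d, k)`. -/
theorem invert_enumeration (u d r l : ℕ) (V H : List Step)
    (hV : ∀ s ∈ V, isVert s = true) (hVne : V ≠ [])
    (hVlast : V.getLast? = some Step.S)
    (hVu : V.count Step.N = u) (hVd : V.count Step.S = d)
    (hH : ∀ s ∈ H, isHoriz s = true)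
    (hHr : H.count Step.E = r) (hHl : H.count Step.W = l)
    (k : ℕ) :
    {σ : List Step | IsShuffle V H σ ∧ invert σ = k}.ncard
      = zch ((r : ℤ) + u) ((u : ℤ) + d - k) * zch ((l : ℤ) + d) (k : ℤ) := by
  subst hVu hVd hHr hHl
  have hset : {σ : List Step | IsShuffle V H σ ∧ invert σ = k}
      = ↑(((shuffles V H).filter (fun σ => decide (invert σ = k))).toFinset) := by
    ext σ
    simp only [Set.mem_setOf_eq, List.coe_toFinset, List.mem_filter,
      decide_eq_true_eq, mem_shuffles V H hV hH σ]
  rw [hset, Set.ncard_coe_finset,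
    List.toFinset_card_of_nodup ((nodup_shuffles V H hV hH).filter _),
    ← List.countP_eq_length_filter,
    countP_eqf _ _ (fun σ => invertAux true σ) (fun σ => invert_eq σ) k,
    (main (V.length + H.length) V H le_rfl hV hH (Or.inr hVlast)).1 k]
  rfl
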